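/- For real numbers β1, β2, ε, v with 0 < β1 ≤ β2 ≤ 2β1, ε ≥ 0, v ≥ 0, and every t > 0, one has β1·e^{−β1 t}·(ε + √(v/(1 − e^{−β2 t}))) ≥ (β2/2)·e^{−β2 t}·((1 − e^{−β1 t})/(1 − e^{−β2 t}))·√(v/(1 − e^{−β2 t})). -/

import Mathlib

/-- Nonnegativity of the time derivative of the Adam bias-corrected preconditioner
(yielding `P₂ ≤ 0` in the proof of Theorem 4): for `0 < β1 ≤ β2 ≤ 2 β1`, `ε ≥ 0`,
`v ≥ 0` and `t > 0`,
`β1 e^{-β1 t} (ε + √(v/(1-e^{-β2 t}))) ≥ (β2/2) e^{-β2 t} ((1-e^{-β1 t})/(1-e^{-β2 t})) √(v/(1-e^{-β2 t}))`. -/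
theorem adam_preconditioner_derivative_nonneg (β1 β2 ε v t : ℝ)
    (hβ1 : 0 < β1) (hβ12 : β1 ≤ β2) (hβ2 : β2 ≤ 2 * β1)
    (hε : 0 ≤ ε) (hv : 0 ≤ v) (ht : 0 < t) :
    β2 / 2 * Real.exp (-(β2 * t)) *
        ((1 - Real.exp (-(β1 * t))) / (1 - Real.exp (-(β2 * t)))) *
        Real.sqrt (v / (1 - Real.exp (-(β2 * t)))) ≤
      β1 * Real.exp (-(β1 * t)) *
        (ε + Real.sqrt (v / (1 - Real.exp (-(β2 * t))))) := by
  set u := Real.exp (β1 * t) with hu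
  set w := Real.exp (β2 * t) with hw
  have hu1 : 1 < u := by rw [hu]; exact Real.one_lt_exp_iff.mpr (by positivity)
  have hw1 : 1 < w := by rw [hw]; exact Real.one_lt_exp_iff.mpr (mul_pos (hβ1.trans_le hβ12) ht)
  have huw : u ≤ w := Real.exp_le_exp.mpr (by nlinarith)
  have hnu : Real.exp (-(β1 * t)) = u⁻¹ := by rw [Real.exp_neg]
  have hnw : Real.exp (-(β2 * t)) = w⁻¹ := by rw [Real.exp_neg]
  have hu0 : 0 < u := by linarith
  have hw0 : 0 < w := by linarith
  have hd : 0 < 1 - Real.exp (-(β2 * t)) := by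
    rw [hnw]
    have : w⁻¹ < 1 := by rw [inv_lt_one_iff₀]; right; exact hw1
    linarith
  set A := Real.sqrt (v / (1 - Real.exp (-(β2 * t)))) with hA
  have hA0 : 0 ≤ A := Real.sqrt_nonneg _
  -- key inequality
  have key : β2 / 2 * Real.exp (-(β2 * t)) * (1 - Real.exp (-(β1 * t))) ≤
      β1 * Real.exp (-(β1 * t)) * (1 - Real.exp (-(β2 * t))) := by
    rw [hnu, hnw]
    have hcore : β2 / 2 * (u - 1) ≤ β1 * (w - 1) := by nlinarith
    rw [← mul_le_mul_iff_of_pos_right (show (0:ℝ) < u * w by positivity)]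
    have e1 : β2 / 2 * w⁻¹ * (1 - u⁻¹) * (u * w) = β2 / 2 * (u - 1) := by
      field_simp
    have e2 : β1 * u⁻¹ * (1 - w⁻¹) * (u * w) = β1 * (w - 1) := by
      field_simp
    rw [e1, e2]; exact hcore
  have step : β2 / 2 * Real.exp (-(β2 * t)) *
      ((1 - Real.exp (-(β1 * t))) / (1 - Real.exp (-(β2 * t)))) ≤
      β1 * Real.exp (-(β1 * t)) := by
    calc β2 / 2 * Real.exp (-(β2 * t)) *
        ((1 - Real.exp (-(β1 * t))) / (1 - Real.exp (-(β2 * t))))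
        = (β2 / 2 * Real.exp (-(β2 * t)) * (1 - Real.exp (-(β1 * t)))) /
          (1 - Real.exp (-(β2 * t))) := by ring
      _ ≤ β1 * Real.exp (-(β1 * t)) := by
          rw [div_le_iff₀ hd]; linarith [key]
  calc β2 / 2 * Real.exp (-(β2 * t)) *
      ((1 - Real.exp (-(β1 * t))) / (1 - Real.exp (-(β2 * t)))) * A
      ≤ β1 * Real.exp (-(β1 * t)) * A := by
        apply mul_le_mul_of_nonneg_right step hA0
    _ ≤ β1 * Real.exp (-(β1 * t)) * (ε + A) := by
        have he : 0 < Real.exp (-(β1 * t)) := Real.exp_pos _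
        nlinarith [mul_nonneg (mul_nonneg hβ1.le he.le) hε]
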